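/- Fix 1 ≤ k < n and a real λ > 0, and let N_k = { l : k < l ≤ n, N(k,l) ≤ λ }. There exists l with k < l ≤ n and M(k,l) ≤ λ if and only if N_k is nonempty and O(k, l_k) ≤ λ, where l_k = min N_k. -/
import Mathlib


noncomputable section

variable {X : Type*} [MetricSpace X]

/-- Path distance between vertices `i` and `j` of the path `p₁, …, pₙ`:
the sum of the edge weights `d(p_t, p_{t+1})` for `min i j ≤ t < max i j`. -/
def pathDist (p : ℕ → X) (i j : ℕ) : ℝ :=
  ∑ t ∈ Finset.Ico (min i j) (max i j), dist (p t) (p (t + 1))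

/-- Shortest-path distance between vertices `x` and `y` in the unicyclic graph
`P̄[k,l]` obtained by adding the shortcut `(p_k, p_l)` of weight `d(p_k, p_l)`. -/
def pbar (p : ℕ → X) (k l x y : ℕ) : ℝ :=
  min (pathDist p x y)
    (min (pathDist p x k + dist (p k) (p l) + pathDist p l y)
         (pathDist p x l + dist (p k) (p l) + pathDist p k y))

/-- The length `|C[k,l]|` of the cycle `C[k,l]`. -/
def cycleLen (p : ℕ → X) (k l : ℕ) : ℝ :=
  pathDist p k l + dist (p k) (p l)

/-- The cycle distance `c_{k,l}(x,y)` for `k ≤ x, y ≤ l`. -/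
def cycDist (p : ℕ → X) (k l x y : ℕ) : ℝ :=
  min (pathDist p x y) (cycleLen p k l - pathDist p x y)

/-- `S(k,l) = max_{k ≤ x ≤ l} p̄_{k,l}(1,x)`. -/
def Sfun (p : ℕ → X) (k l : ℕ) : ℝ :=
  sSup ((fun x => pbar p k l 1 x) '' Set.Icc k l)

/-- `E(k,l) = max_{k ≤ x ≤ l} p̄_{k,l}(x,n)`. -/
def Efun (p : ℕ → X) (n k l : ℕ) : ℝ :=
  sSup ((fun x => pbar p k l x n) '' Set.Icc k l)

/-- `U(k,l) = p̄_{k,l}(1,n)`. -/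
def Ufun (p : ℕ → X) (n k l : ℕ) : ℝ :=
  pbar p k l 1 n

/-- `O(k,l) = max_{k ≤ x < y ≤ l} c_{k,l}(x,y)`. -/
def Ofun (p : ℕ → X) (k l : ℕ) : ℝ :=
  sSup {r | ∃ x y : ℕ, k ≤ x ∧ x < y ∧ y ≤ l ∧ r = cycDist p k l x y}

/-- `N(k,l) = max (S(k,l), E(k,l), U(k,l))`. -/
def Nfun (p : ℕ → X) (n k l : ℕ) : ℝ :=
  max (Sfun p k l) (max (Efun p n k l) (Ufun p n k l))

/-- `M(k,l) = max_{1 ≤ x < y ≤ n} p̄_{k,l}(x,y)`, the diameter of `P̄[k,l]`. -/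
def Mfun (p : ℕ → X) (n k l : ℕ) : ℝ :=
  sSup {r | ∃ x y : ℕ, 1 ≤ x ∧ x < y ∧ y ≤ n ∧ r = pbar p k l x y}


section Helpers

variable {X : Type*} [MetricSpace X] (p : ℕ → X)

lemma pathDist_nonneg (i j : ℕ) : 0 ≤ pathDist p i j :=
  Finset.sum_nonneg fun _ _ => dist_nonneg

lemma pathDist_comm (i j : ℕ) : pathDist p i j = pathDist p j i := by
  unfold pathDist; rw [min_comm, max_comm]

lemma pathDist_self (i : ℕ) : pathDist p i i = 0 := by
  simp [pathDist]

lemma pathDist_add {i j k : ℕ} (h1 : i ≤ j) (h2 : j ≤ k) :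
    pathDist p i k = pathDist p i j + pathDist p j k := by
  unfold pathDist
  rw [min_eq_left (h1.trans h2), max_eq_right (h1.trans h2), min_eq_left h1, max_eq_right h1,
    min_eq_left h2, max_eq_right h2, Finset.sum_Ico_consecutive _ h1 h2]

lemma pathDist_le (p : ℕ → X) {a' a b b' : ℕ} (ha : a' ≤ a) (hab : a ≤ b) (hb : b ≤ b') :
    pathDist p a b ≤ pathDist p a' b' := by
  rw [pathDist_add p ha (hab.trans hb), pathDist_add p hab hb]
  have := pathDist_nonneg p a' a
  have := pathDist_nonneg p b b'
  linarith

lemma dist_le_pathDist {i j : ℕ} (h : i ≤ j) : dist (p i) (p j) ≤ pathDist p i j := by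
  have key := dist_le_range_sum_dist (fun t => p (i + t)) (j - i)
  unfold pathDist
  rw [min_eq_left h, max_eq_right h, Finset.sum_Ico_eq_sum_range]
  simpa [Nat.add_sub_cancel' h, Nat.add_assoc] using key

lemma pbar_le_pathDist (k l x y : ℕ) : pbar p k l x y ≤ pathDist p x y := min_le_left _ _

lemma pbar_nonneg (k l x y : ℕ) : 0 ≤ pbar p k l x y := by
  unfold pbar
  have h1 := pathDist_nonneg p x y
  have h2 := pathDist_nonneg p x k
  have h3 := pathDist_nonneg p l y
  have h4 := pathDist_nonneg p x l
  have h5 := pathDist_nonneg p k y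
  have h6 : (0:ℝ) ≤ dist (p k) (p l) := dist_nonneg
  simp only [le_min_iff]
  exact ⟨h1, by linarith, by linarith⟩

lemma pbar_self (k l x : ℕ) : pbar p k l x x = 0 :=
  le_antisymm (by simpa [pathDist_self] using pbar_le_pathDist p k l x x)
    (pbar_nonneg p k l x x)

lemma pbar_le_pbar {k l x y x' y' : ℕ}
    (h1 : pathDist p x y ≤ pathDist p x' y')
    (h2 : pathDist p x k ≤ pathDist p x' k) (h3 : pathDist p l y ≤ pathDist p l y')
    (h4 : pathDist p x l ≤ pathDist p x' l) (h5 : pathDist p k y ≤ pathDist p k y') :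
    pbar p k l x y ≤ pbar p k l x' y' := by
  unfold pbar
  exact min_le_min h1 (min_le_min (by linarith) (by linarith))

lemma pbar_eq_cycDist {k l x y : ℕ} (hkx : k ≤ x) (hxy : x ≤ y) (hyl : y ≤ l) :
    pbar p k l x y = cycDist p k l x y := by
  have e1 := pathDist_add p hkx hxy
  have e2 := pathDist_add p (hkx.trans hxy) hyl
  have hxk : pathDist p x k = pathDist p k x := pathDist_comm p x k
  have hly : pathDist p l y = pathDist p y l := pathDist_comm p l y
  unfold pbar cycDist cycleLen
  have e3 : pathDist p x k + dist (p k) (p l) + pathDist p l y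
      = pathDist p k l + dist (p k) (p l) - pathDist p x y := by
    rw [hxk, hly]; linarith
  rw [e3]
  congr 1
  apply min_eq_left
  have e4 : pathDist p x l = pathDist p x y + pathDist p y l := pathDist_add p hxy hyl
  have e5 : pathDist p k y = pathDist p k x + pathDist p x y := pathDist_add p hkx hxy
  have hnn := pathDist_nonneg p x y
  linarith

lemma cycDist_le_pbar {k l l' x y : ℕ} (hkx : k ≤ x) (hxy : x ≤ y) (hyl : y ≤ l')
    (hll : l' ≤ l) :
    cycDist p k l' x y ≤ pbar p k l x y := by
  rw [← pbar_eq_cycDist p hkx hxy hyl]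
  unfold pbar
  have hd : dist (p k) (p l') ≤ dist (p k) (p l) + pathDist p l' l := by
    have t1 := dist_le_pathDist p hll
    have t2 := dist_triangle (p k) (p l) (p l')
    rw [dist_comm (p l) (p l')] at t2
    linarith
  have hly : pathDist p l y = pathDist p y l' + pathDist p l' l := by
    rw [pathDist_comm p l y]; exact pathDist_add p hyl hll
  have hly' : pathDist p l' y = pathDist p y l' := pathDist_comm p l' y
  have hxl : pathDist p x l = pathDist p x l' + pathDist p l' l :=
    pathDist_add p (hxy.trans hyl) hll
  refine min_le_min le_rfl (min_le_min (by linarith) (by linarith))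

lemma Mset_bdd (n k l : ℕ) :
    BddAbove {r : ℝ | ∃ x y : ℕ, 1 ≤ x ∧ x < y ∧ y ≤ n ∧ r = pbar p k l x y} := by
  apply Set.Finite.bddAbove
  apply Set.Finite.subset
    (Set.finite_range (fun q : Fin (n + 1) × Fin (n + 1) => pbar p k l q.1 q.2))
  rintro r ⟨x, y, h1, h2, h3, rfl⟩
  exact ⟨(⟨x, by omega⟩, ⟨y, by omega⟩), rfl⟩

lemma Oset_bdd (k l : ℕ) :
    BddAbove {r : ℝ | ∃ x y : ℕ, k ≤ x ∧ x < y ∧ y ≤ l ∧ r = cycDist p k l x y} := by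
  apply Set.Finite.bddAbove
  apply Set.Finite.subset
    (Set.finite_range (fun q : Fin (l + 1) × Fin (l + 1) => cycDist p k l q.1 q.2))
  rintro r ⟨x, y, h1, h2, h3, rfl⟩
  exact ⟨(⟨x, by omega⟩, ⟨y, by omega⟩), rfl⟩

lemma Sset_bdd (k l : ℕ) : BddAbove ((fun x => pbar p k l 1 x) '' Set.Icc k l) :=
  ((Set.finite_Icc k l).image _).bddAbove

lemma Eset_bdd (n k l : ℕ) : BddAbove ((fun x => pbar p k l x n) '' Set.Icc k l) :=
  ((Set.finite_Icc k l).image _).bddAbove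

lemma key_pair_le {n k l : ℕ} {lam : ℝ} (hM : Mfun p n k l ≤ lam)
    {x y : ℕ} (h1 : 1 ≤ x) (h2 : x < y) (h3 : y ≤ n) : pbar p k l x y ≤ lam :=
  le_trans (le_csSup (Mset_bdd p n k l) ⟨x, y, h1, h2, h3, rfl⟩) hM

lemma M_le_iff {n k l : ℕ} {lam : ℝ} (hk : 1 ≤ k) (hkl : k < l) (hln : l ≤ n)
    (hlam : 0 ≤ lam) :
    Mfun p n k l ≤ lam ↔ Nfun p n k l ≤ lam ∧ Ofun p k l ≤ lam := by
  constructor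
  · intro hM
    refine ⟨?_, ?_⟩
    · rw [Nfun]
      refine max_le ?_ (max_le ?_ ?_)
      · apply Real.sSup_le _ hlam
        rintro r ⟨x, hx, rfl⟩
        rcases eq_or_lt_of_le (hk.trans hx.1) with h | h
        · simp only [← h, pbar_self]; exact hlam
        · exact key_pair_le p hM le_rfl h (hx.2.trans hln)
      · apply Real.sSup_le _ hlam
        rintro r ⟨x, hx, rfl⟩
        rcases eq_or_lt_of_le (hx.2.trans hln) with h | h
        · simp only [h, pbar_self]; exact hlam
        · exact key_pair_le p hM (hk.trans hx.1) h le_rfl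
      · exact key_pair_le p hM le_rfl (by omega) le_rfl
    · apply Real.sSup_le _ hlam
      rintro r ⟨x, y, hx, hxy, hyl, rfl⟩
      rw [← pbar_eq_cycDist p hx hxy.le hyl]
      exact key_pair_le p hM (hk.trans hx) hxy (hyl.trans hln)
  · rintro ⟨hN, hO⟩
    rw [Nfun, max_le_iff, max_le_iff] at hN
    obtain ⟨hS, hE, hU⟩ : Sfun p k l ≤ lam ∧ Efun p n k l ≤ lam ∧ Ufun p n k l ≤ lam :=
      ⟨hN.1, hN.2.1, hN.2.2⟩
    apply Real.sSup_le _ hlam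
    rintro r ⟨x, y, hx, hxy, hyn, rfl⟩
    by_cases hyk : y ≤ k
    · -- both left of k
      have h1 : pbar p k l x y ≤ pathDist p 1 k :=
        (pbar_le_pathDist p k l x y).trans (pathDist_le p hx hxy.le hyk)
      have h2 : pathDist p 1 k ≤ pbar p k l 1 k := by
        unfold pbar
        have e1 : pathDist p 1 l = pathDist p 1 k + pathDist p k l :=
          pathDist_add p hk hkl.le
        have n1 := pathDist_nonneg p l k
        have n2 := pathDist_nonneg p k l
        have n3 := pathDist_nonneg p k k
        have n4 : (0:ℝ) ≤ dist (p k) (p l) := dist_nonneg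
        refine le_min (le_refl _) (le_min (by linarith) (by linarith))
      have h3 : pbar p k l 1 k ≤ Sfun p k l :=
        le_csSup (Sset_bdd p k l) ⟨k, ⟨le_rfl, hkl.le⟩, rfl⟩
      linarith
    by_cases hlx : l ≤ x
    · -- both right of l
      have h1 : pbar p k l x y ≤ pathDist p l n :=
        (pbar_le_pathDist p k l x y).trans (pathDist_le p hlx hxy.le hyn)
      have h2 : pathDist p l n ≤ pbar p k l l n := by
        unfold pbar
        have e1 : pathDist p k n = pathDist p k l + pathDist p l n :=
          pathDist_add p hkl.le hln
        have n1 := pathDist_nonneg p l k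
        have n2 := pathDist_nonneg p k l
        have n3 := pathDist_nonneg p l l
        have n4 : (0:ℝ) ≤ dist (p k) (p l) := dist_nonneg
        refine le_min (le_refl _) (le_min (by linarith) (by linarith))
      have h3 : pbar p k l l n ≤ Efun p n k l :=
        le_csSup (Eset_bdd p n k l) ⟨l, ⟨hkl.le, le_rfl⟩, rfl⟩
      linarith
    push_neg at hyk hlx
    by_cases hxk : x ≤ k
    · by_cases hyl : y ≤ l
      · -- x ≤ k ≤ y ≤ l : compare with (1, y)
        have h1 : pbar p k l x y ≤ pbar p k l 1 y :=
          pbar_le_pbar p (pathDist_le p hx hxy.le le_rfl)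
            (pathDist_le p hx hxk le_rfl) le_rfl
            (pathDist_le p hx (hxk.trans hkl.le) le_rfl) le_rfl
        have h3 : pbar p k l 1 y ≤ Sfun p k l :=
          le_csSup (Sset_bdd p k l) ⟨y, ⟨hyk.le, hyl⟩, rfl⟩
        linarith
      · -- x ≤ k, l < y : compare with (1, n)
        push_neg at hyl
        have h1 : pbar p k l x y ≤ pbar p k l 1 n :=
          pbar_le_pbar p (pathDist_le p hx hxy.le hyn)
            (pathDist_le p hx hxk le_rfl) (pathDist_le p le_rfl hyl.le hyn)
            (pathDist_le p hx (hxk.trans hkl.le) le_rfl)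
            (pathDist_le p le_rfl hyk.le hyn)
        exact h1.trans hU
    · push_neg at hxk
      by_cases hyl : y ≤ l
      · -- k ≤ x < y ≤ l : cycle pair
        rw [pbar_eq_cycDist p hxk.le hxy.le hyl]
        exact (le_csSup (Oset_bdd p k l) ⟨x, y, hxk.le, hxy, hyl, rfl⟩).trans hO
      · -- k < x < l < y : compare with (x, n)
        push_neg at hyl
        have h1 : pbar p k l x y ≤ pbar p k l x n :=
          pbar_le_pbar p (pathDist_le p le_rfl hxy.le hyn) le_rfl
            (pathDist_le p le_rfl hyl.le hyn) le_rfl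
            (pathDist_le p le_rfl (hyk.le) hyn)
        have h3 : pbar p k l x n ≤ Efun p n k l :=
          le_csSup (Eset_bdd p n k l) ⟨x, ⟨hxk.le, hlx.le⟩, rfl⟩
        linarith

end Helpers

/-- Fix `1 ≤ k < n` and `λ > 0`, and let
`N_k = { l : k < l ≤ n, N(k,l) ≤ λ }`. There exists `l` with `k < l ≤ n` and
`M(k,l) ≤ λ` if and only if `N_k` is nonempty and `O(k, l_k) ≤ λ`, where
`l_k = min N_k`. -/
theorem exists_good_shortcut_iff {X : Type*} [MetricSpace X]
    (n : ℕ) (hn : 2 ≤ n) (p : ℕ → X)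
    (k : ℕ) (hk : 1 ≤ k) (hkn : k < n) (lam : ℝ) (hlam : 0 < lam) :
    (∃ l : ℕ, k < l ∧ l ≤ n ∧ Mfun p n k l ≤ lam) ↔
      ({l : ℕ | k < l ∧ l ≤ n ∧ Nfun p n k l ≤ lam}.Nonempty ∧
        Ofun p k (sInf {l : ℕ | k < l ∧ l ≤ n ∧ Nfun p n k l ≤ lam}) ≤ lam) := by
  constructor
  · rintro ⟨l, hkl, hln, hM⟩
    have hNO := (M_le_iff p hk hkl hln hlam.le).mp hM
    have hlmem : l ∈ {l : ℕ | k < l ∧ l ≤ n ∧ Nfun p n k l ≤ lam} := ⟨hkl, hln, hNO.1⟩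
    have hne : {l : ℕ | k < l ∧ l ≤ n ∧ Nfun p n k l ≤ lam}.Nonempty := ⟨l, hlmem⟩
    refine ⟨hne, ?_⟩
    have hle : sInf {l : ℕ | k < l ∧ l ≤ n ∧ Nfun p n k l ≤ lam} ≤ l := Nat.sInf_le hlmem
    apply Real.sSup_le _ hlam.le
    rintro r ⟨x, y, hkx, hxy, hyl, rfl⟩
    have h1 := cycDist_le_pbar p hkx hxy.le hyl hle
    have h2 := key_pair_le p hM (hk.trans hkx) hxy (le_trans (hyl.trans hle) hln)
    linarith
  · rintro ⟨hne, hO⟩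
    have hmem := Nat.sInf_mem hne
    obtain ⟨h1, h2, h3⟩ := hmem
    exact ⟨_, h1, h2, (M_le_iff p hk h1 h2 hlam.le).mpr ⟨h3, hO⟩⟩
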